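/- For every natural number n ≥ 9, in the Bob-start 3-coloring game on the 4×n cylinder graph Bob has a winning strategy; consequently χ_g^B(P_4 □ C_n) ≥ 4. -/

import Mathlib

open SimpleGraph

/-- A move coloring vertex `v` with color `col` is valid for the partial coloring `c`
if `v` is uncolored and no neighbor of `v` already has color `col`. -/
def validMove {V : Type*} (G : SimpleGraph V) {k : ℕ} (c : V → Option (Fin k))
    (v : V) (col : Fin k) : Prop :=
  c v = none ∧ ∀ u, G.Adj u v → c u ≠ some col

/-- All vertices are colored. -/
def allColored {V : Type*} {k : ℕ} (c : V → Option (Fin k)) : Prop :=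
  ∀ v, c v ≠ none

/-- `AliceWins G k turn c` : starting from the partial proper coloring `c` of `G`,
with `turn = true` meaning that it is Alice's move (`turn = false` : Bob's move),
Alice can force the `k`-coloring game to end with every vertex colored. -/
inductive AliceWins {V : Type*} [DecidableEq V] (G : SimpleGraph V) (k : ℕ) :
    Bool → (V → Option (Fin k)) → Prop
  | finished (turn : Bool) (c : V → Option (Fin k)) (h : allColored c) :
      AliceWins G k turn c
  | aliceMove (c : V → Option (Fin k)) (v : V) (col : Fin k)
      (hm : validMove G c v col)
      (h : AliceWins G k false (Function.update c v (some col))) :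
      AliceWins G k true c
  | bobTurn (c : V → Option (Fin k))
      (hne : ∃ v col, validMove G c v col)
      (h : ∀ v col, validMove G c v col →
        AliceWins G k true (Function.update c v (some col))) :
      AliceWins G k false c

/-- `BobWins G k turn c` : starting from the partial proper coloring `c` of `G`,
with `turn = true` meaning that it is Alice's move (`turn = false` : Bob's move),
Bob can force the `k`-coloring game to end with some vertex left uncolored. -/
inductive BobWins {V : Type*} [DecidableEq V] (G : SimpleGraph V) (k : ℕ) :
    Bool → (V → Option (Fin k)) → Prop
  | aliceTurn (c : V → Option (Fin k)) (h0 : ¬ allColored c)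
      (h : ∀ v col, validMove G c v col →
        BobWins G k false (Function.update c v (some col))) :
      BobWins G k true c
  | bobMove (c : V → Option (Fin k)) (v : V) (col : Fin k)
      (hm : validMove G c v col)
      (h : BobWins G k true (Function.update c v (some col))) :
      BobWins G k false c
  | bobStuck (c : V → Option (Fin k)) (h0 : ¬ allColored c)
      (h : ∀ v col, ¬ validMove G c v col) :
      BobWins G k false c

/-- The game chromatic number: the least `k` such that Alice has a winning strategy
in the `k`-coloring game on `G` (Alice moves first), starting from the empty coloring. -/
noncomputable def gameChromaticNumber {V : Type*} [DecidableEq V] (G : SimpleGraph V) : ℕ :=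
  sInf {k | AliceWins G k true (fun _ => none)}

/-- The Bob-start game chromatic number: the least `k` such that Alice has a winning
strategy in the `k`-coloring game on `G` in which Bob moves first. -/
noncomputable def bobStartGameChromaticNumber {V : Type*} [DecidableEq V]
    (G : SimpleGraph V) : ℕ :=
  sInf {k | AliceWins G k false (fun _ => none)}


set_option linter.unusedSectionVars false
set_option linter.unusedVariables false
set_option maxHeartbeats 1000000

section Generic

variable {V : Type*} [DecidableEq V] [Fintype V] {k : ℕ}

/-- The number of uncolored vertices. -/
def uncoloredCount (c : V → Option (Fin k)) : ℕ :=
  (Finset.univ.filter (fun v => c v = none)).card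

lemma uncoloredCount_update_lt {c : V → Option (Fin k)} {v : V} (hv : c v = none)
    (col : Fin k) :
    uncoloredCount (Function.update c v (some col)) < uncoloredCount c := by
  apply Finset.card_lt_card
  constructor
  · intro w hw
    simp only [Finset.mem_filter, Finset.mem_univ, true_and] at hw ⊢
    rcases eq_or_ne w v with rfl | hne
    · rw [Function.update_self] at hw; exact absurd hw (by simp)
    · rwa [Function.update_of_ne hne] at hw
  · intro hsub
    have hv' : v ∈ Finset.univ.filter (fun w => c w = none) := by
      simp only [Finset.mem_filter, Finset.mem_univ, true_and]; exact hv
    have := hsub hv'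
    simp only [Finset.mem_filter, Finset.mem_univ, true_and, Function.update_self] at this
    exact absurd this (by simp)

/-- If some uncolored vertex already sees all `k` colors, Bob wins (whoever is to move). -/
lemma bobWins_of_dead (G : SimpleGraph V) :
    ∀ (N : ℕ) (c : V → Option (Fin k)) (turn : Bool) (u : V),
      uncoloredCount c ≤ N → c u = none →
      (∀ col : Fin k, ∃ w, G.Adj w u ∧ c w = some col) →
      BobWins G k turn c := by
  intro N
  induction N with
  | zero =>
    intro c turn u hN hu _
    exfalso
    have hv' : u ∈ Finset.univ.filter (fun w => c w = none) := by
      simp only [Finset.mem_filter, Finset.mem_univ, true_and]; exact hu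
    have := Finset.card_pos.mpr ⟨u, hv'⟩
    unfold uncoloredCount at hN
    omega
  | succ N ih =>
    intro c turn u hN hu hdead
    have hnotall : ¬ allColored c := fun h => h u hu
    have step : ∀ (v : V) (col : Fin k) (turn' : Bool), validMove G c v col →
        BobWins G k turn' (Function.update c v (some col)) := by
      intro v col turn' hvc
      have hvu : v ≠ u := by
        rintro rfl
        obtain ⟨w, hadj, hcw⟩ := hdead col
        exact hvc.2 w hadj hcw
      apply ih _ turn' u ?_ ?_ ?_
      · have := uncoloredCount_update_lt hvc.1 col; omega
      · rw [Function.update_of_ne (Ne.symm hvu)]; exact hu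
      · intro col'
        obtain ⟨w, hadj, hcw⟩ := hdead col'
        have hwv : w ≠ v := by rintro rfl; rw [hvc.1] at hcw; cases hcw
        exact ⟨w, hadj, by rw [Function.update_of_ne hwv]; exact hcw⟩
    cases turn with
    | false =>
      by_cases hex : ∃ v col, validMove G c v col
      · obtain ⟨v, col, hvc⟩ := hex
        exact BobWins.bobMove c v col hvc (step v col true hvc)
      · push_neg at hex
        exact BobWins.bobStuck c hnotall hex
    | true =>
      exact BobWins.aliceTurn c hnotall (fun v col h => step v col false h)

/-- Killing a single surviving threat. -/
lemma bobWins_kill (G : SimpleGraph V) (c : V → Option (Fin k)) (u t : V) (col : Fin k)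
    (v : V) (cv : Fin k)
    (hu : c u = none) (ht : c t = none) (hadj : G.Adj t u)
    (hopen : ∀ w, G.Adj w t → c w ≠ some col)
    (hwit : ∀ col', col' ≠ col → ∃ w, G.Adj w u ∧ c w = some col')
    (hv : c v = none)
    (hfar : ¬(v = u ∨ v = t ∨ G.Adj v t)) :
    BobWins G k false (Function.update c v (some cv)) := by
  push_neg at hfar
  obtain ⟨hvu, hvt, hvadj⟩ := hfar
  set c1 := Function.update c v (some cv) with hc1
  have hvalid : validMove G c1 t col := by
    constructor
    · rw [hc1, Function.update_of_ne (Ne.symm hvt)]; exact ht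
    · intro w hw
      rcases eq_or_ne w v with rfl | hwv
      · exact absurd hw hvadj
      · rw [hc1, Function.update_of_ne hwv]; exact hopen w hw
  refine BobWins.bobMove c1 t col hvalid ?_
  have htu : u ≠ t := fun h => by subst h; exact G.irrefl hadj
  apply bobWins_of_dead G (uncoloredCount (Function.update c1 t (some col))) _ true u le_rfl ?_ ?_
  · rw [Function.update_of_ne htu, hc1, Function.update_of_ne (Ne.symm hvu)]; exact hu
  · intro col'
    by_cases hcol : col' = col
    · subst hcol
      exact ⟨t, hadj, Function.update_self _ _ _⟩
    · obtain ⟨w, hadjw, hcw⟩ := hwit col' hcol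
      have hwt : w ≠ t := fun h => by subst h; rw [ht] at hcw; cases hcw
      have hwv : w ≠ v := fun h => by subst h; rw [hv] at hcw; cases hcw
      exact ⟨w, hadjw, by
        rw [Function.update_of_ne hwt, hc1, Function.update_of_ne hwv]; exact hcw⟩

/-- Two independent threats at Alice's turn: Bob wins. -/
lemma bobWins_double_threat (G : SimpleGraph V) (c : V → Option (Fin k))
    (u1 t1 u2 t2 : V) (col1 col2 : Fin k)
    (hu1 : c u1 = none) (ht1 : c t1 = none) (ha1 : G.Adj t1 u1)
    (hopen1 : ∀ w, G.Adj w t1 → c w ≠ some col1)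
    (hwit1 : ∀ col', col' ≠ col1 → ∃ w, G.Adj w u1 ∧ c w = some col')
    (hu2 : c u2 = none) (ht2 : c t2 = none) (ha2 : G.Adj t2 u2)
    (hopen2 : ∀ w, G.Adj w t2 → c w ≠ some col2)
    (hwit2 : ∀ col', col' ≠ col2 → ∃ w, G.Adj w u2 ∧ c w = some col')
    (indep : ∀ x, (x = u1 ∨ x = t1 ∨ G.Adj x t1) → (x = u2 ∨ x = t2 ∨ G.Adj x t2) → False) :
    BobWins G k true c := by
  refine BobWins.aliceTurn c (fun h => h u1 hu1) ?_
  intro v cv hvc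
  by_cases hbad : v = u1 ∨ v = t1 ∨ G.Adj v t1
  · exact bobWins_kill G c u2 t2 col2 v cv hu2 ht2 ha2 hopen2 hwit2 hvc.1
      (fun h2 => indep v hbad h2)
  · exact bobWins_kill G c u1 t1 col1 v cv hu1 ht1 ha1 hopen1 hwit1 hvc.1 hbad

/-- Alice and Bob cannot both win. -/
lemma not_aliceWins_and_bobWins {W : Type*} [DecidableEq W] (G : SimpleGraph W) (k : ℕ) :
    ∀ {turn : Bool} {c : W → Option (Fin k)},
      AliceWins G k turn c → BobWins G k turn c → False := by
  intro turn c hA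
  induction hA with
  | finished turn c h =>
    intro hB
    cases hB with
    | aliceTurn _ h0 _ => exact h0 h
    | bobMove _ v col hm _ => exact h v hm.1
    | bobStuck _ h0 _ => exact h0 h
  | aliceMove c v col hm h ih =>
    intro hB
    cases hB with
    | aliceTurn _ h0 hB' => exact ih (hB' v col hm)
  | bobTurn c hne h ih =>
    intro hB
    cases hB with
    | bobMove _ v col hm hB' => exact ih v col hm hB'
    | bobStuck _ h0 hstuck => obtain ⟨v, col, hv⟩ := hne; exact hstuck v col hv

/-- If every vertex has few potential neighbors, there is always a legal color available. -/
lemma exists_validMove (G : SimpleGraph V) (c : V → Option (Fin k)) (v : V)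
    (hv : c v = none) (s : Finset V) (hcard : s.card < k)
    (hs : ∀ w, G.Adj w v → w ∈ s) :
    ∃ col : Fin k, validMove G c v col := by
  classical
  have hex : ∃ col : Fin k, some col ∉ s.image c := by
    by_contra h
    push_neg at h
    have hinj : Set.InjOn (fun col : Fin k => (some col : Option (Fin k)))
        ((Finset.univ : Finset (Fin k)) : Set (Fin k)) := by
      intro a _ b _ hab; exact Option.some_injective _ hab
    have := Finset.card_le_card_of_injOn (fun col : Fin k => (some col : Option (Fin k)))
      (fun a _ => h a) hinj
    have hk : (Finset.univ : Finset (Fin k)).card = k := by simp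
    have := Finset.card_image_le (s := s) (f := c)
    omega
  obtain ⟨col, hcol⟩ := hex
  refine ⟨col, hv, fun w hw hcw => hcol ?_⟩
  rw [← hcw]
  exact Finset.mem_image_of_mem c (hs w hw)

/-- If `k` exceeds the degree of every vertex, Alice wins no matter what. -/
lemma aliceWins_of_small_neighborhoods (G : SimpleGraph V)
    (hnb : ∀ v : V, ∃ s : Finset V, s.card < k ∧ ∀ w, G.Adj w v → w ∈ s) :
    ∀ (N : ℕ) (c : V → Option (Fin k)) (turn : Bool),
      uncoloredCount c ≤ N → AliceWins G k turn c := by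
  intro N
  induction N with
  | zero =>
    intro c turn hN
    refine AliceWins.finished turn c (fun v hv => ?_)
    have hv' : v ∈ Finset.univ.filter (fun w => c w = none) := by
      simp only [Finset.mem_filter, Finset.mem_univ, true_and]; exact hv
    have := Finset.card_pos.mpr ⟨v, hv'⟩
    unfold uncoloredCount at hN
    omega
  | succ N ih =>
    intro c turn hN
    by_cases hall : allColored c
    · exact AliceWins.finished turn c hall
    · have hex : ∃ v, c v = none := by
        by_contra h; push_neg at h; exact hall (fun v => h v)
      obtain ⟨u, hu⟩ := hex
      obtain ⟨s, hcard, hs⟩ := hnb u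
      obtain ⟨col, hcol⟩ := exists_validMove G c u hu s hcard hs
      cases turn with
      | false =>
        refine AliceWins.bobTurn c ⟨u, col, hcol⟩ (fun v col' hm => ih _ true ?_)
        have := uncoloredCount_update_lt hm.1 col'; omega
      | true =>
        refine AliceWins.aliceMove c u col hcol (ih _ false ?_)
        have := uncoloredCount_update_lt hu col; omega

/-- The key gadget: Bob completes a double threat with his second move. -/
lemma gadgetWin (G : SimpleGraph V) (c : V → Option (Fin 3)) (p u1 t1 u2 t2 : V)
    (hp : validMove G c p 1)
    (hpu1 : G.Adj p u1) (hpu2 : G.Adj p u2)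
    (hu1 : c u1 = none) (ht1 : c t1 = none) (ht1u1 : G.Adj t1 u1) (ht1p : t1 ≠ p)
    (hopen1 : ∀ w, G.Adj w t1 → c w ≠ some 2)
    (hwit1 : ∃ w, G.Adj w u1 ∧ c w = some 0)
    (hu2 : c u2 = none) (ht2 : c t2 = none) (ht2u2 : G.Adj t2 u2) (ht2p : t2 ≠ p)
    (hopen2 : ∀ w, G.Adj w t2 → c w ≠ some 2)
    (hwit2 : ∃ w, G.Adj w u2 ∧ c w = some 0)
    (indep : ∀ x, (x = u1 ∨ x = t1 ∨ G.Adj x t1) → (x = u2 ∨ x = t2 ∨ G.Adj x t2) → False) :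
    BobWins G 3 false c := by
  refine BobWins.bobMove c p 1 hp ?_
  set c' := Function.update c p (some 1) with hc'
  have hcp : c p = none := hp.1
  have heval : ∀ w, w ≠ p → c' w = c w := fun w hw => by
    rw [hc', Function.update_of_ne hw]
  have hwit : ∀ (u t : V), G.Adj p u → (∃ w, G.Adj w u ∧ c w = some 0) →
      ∀ col' : Fin 3, col' ≠ 2 → ∃ w, G.Adj w u ∧ c' w = some col' := by
    intro u t hpu hw0 col' hcol'
    have hval : col'.val = 0 ∨ col'.val = 1 := by
      have h3 := col'.isLt
      have : col'.val ≠ 2 := fun h => hcol' (Fin.ext h)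
      omega
    rcases hval with hval | hval
    · obtain ⟨w, hw, hcw⟩ := hw0
      have hwp : w ≠ p := fun h => by subst h; rw [hcp] at hcw; cases hcw
      have : col' = 0 := Fin.ext hval
      subst this
      exact ⟨w, hw, by rw [heval w hwp]; exact hcw⟩
    · have : col' = 1 := Fin.ext hval
      subst this
      exact ⟨p, hpu, by rw [hc', Function.update_self]⟩
  have hopen : ∀ (t : V), (∀ w, G.Adj w t → c w ≠ some 2) →
      ∀ w, G.Adj w t → c' w ≠ some 2 := by
    intro t h0 w hw
    rcases eq_or_ne w p with rfl | hwp
    · rw [hc', Function.update_self]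
      intro hcontra
      exact absurd (Option.some_injective _ hcontra) (by decide)
    · rw [heval w hwp]; exact h0 w hw
  refine bobWins_double_threat G c' u1 t1 u2 t2 2 2 ?_ ?_ ht1u1 (hopen t1 hopen1)
    (hwit u1 t1 hpu1 hwit1) ?_ ?_ ht2u2 (hopen t2 hopen2) (hwit u2 t2 hpu2 hwit2) indep
  · rw [heval u1 (Ne.symm (G.ne_of_adj hpu1))]; exact hu1
  · rw [heval t1 ht1p]; exact ht1
  · rw [heval u2 (Ne.symm (G.ne_of_adj hpu2))]; exact hu2
  · rw [heval t2 ht2p]; exact ht2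

/-- The gadget, starting from the position after Bob's anchor move and Alice's reply. -/
lemma cylGadget (G : SimpleGraph V) (A v : V) (cv : Fin 3) (p u1 t1 u2 t2 : V)
    (h1 : G.Adj p u1) (h2 : G.Adj p u2) (h3 : G.Adj t1 u1) (h4 : G.Adj t2 u2)
    (h5 : G.Adj A u1) (h6 : G.Adj A u2)
    (h7 : t1 ≠ p) (h8 : t2 ≠ p) (h9 : p ≠ A) (h9b : t1 ≠ A) (h9d : t2 ≠ A)
    (hva : v ≠ A)
    (h10 : v ≠ p) (h10a : v ≠ u1) (h10b : v ≠ t1) (h10c : v ≠ u2) (h10d : v ≠ t2)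
    (h11 : ¬ G.Adj v p) (h11a : ¬ G.Adj v t1) (h11b : ¬ G.Adj v t2)
    (indep : ∀ x, (x = u1 ∨ x = t1 ∨ G.Adj x t1) → (x = u2 ∨ x = t2 ∨ G.Adj x t2) → False) :
    BobWins G 3 false
      (Function.update (Function.update (fun _ => none) A (some 0)) v (some cv)) := by
  set c := Function.update (Function.update (fun _ : V => none) A (some 0)) v (some cv)
    with hc
  have hcA : c A = some 0 := by
    rw [hc, Function.update_of_ne (Ne.symm hva), Function.update_self]
  have hcv : c v = some cv := by rw [hc, Function.update_self]
  have heval : ∀ w, w ≠ A → w ≠ v → c w = none := by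
    intro w hwA hwv
    rw [hc, Function.update_of_ne hwv, Function.update_of_ne hwA]
  have hu1A : u1 ≠ A := Ne.symm (G.ne_of_adj h5)
  have hu2A : u2 ≠ A := Ne.symm (G.ne_of_adj h6)
  apply gadgetWin G c p u1 t1 u2 t2 ?_ h1 h2
    (heval u1 hu1A (Ne.symm h10a)) (heval t1 h9b (Ne.symm h10b)) h3 h7 ?_
    ⟨A, h5, hcA⟩
    (heval u2 hu2A (Ne.symm h10c)) (heval t2 h9d (Ne.symm h10d)) h4 h8 ?_
    ⟨A, h6, hcA⟩ indep
  · refine ⟨heval p h9 (Ne.symm h10), ?_⟩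
    intro w hw
    rcases eq_or_ne w v with rfl | hwv
    · exact absurd hw h11
    rcases eq_or_ne w A with rfl | hwA
    · rw [hcA]; intro hcontra; exact absurd (Option.some_injective _ hcontra) (by decide)
    · rw [heval w hwA hwv]; exact fun h => by cases h
  · intro w hw
    rcases eq_or_ne w v with rfl | hwv
    · exact absurd hw h11a
    rcases eq_or_ne w A with rfl | hwA
    · rw [hcA]; intro hcontra; exact absurd (Option.some_injective _ hcontra) (by decide)
    · rw [heval w hwA hwv]; exact fun h => by cases h
  · intro w hw
    rcases eq_or_ne w v with rfl | hwv
    · exact absurd hw h11b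
    rcases eq_or_ne w A with rfl | hwA
    · rw [hcA]; intro hcontra; exact absurd (Option.some_injective _ hcontra) (by decide)
    · rw [heval w hwA hwv]; exact fun h => by cases h

end Generic

section Cylinder

lemma mod_cases' {a n : ℕ} (hn : 0 < n) (h : a < 2 * n) :
    (a < n ∧ a % n = a) ∨ (n ≤ a ∧ a % n = a - n) := by
  rcases Nat.lt_or_ge a n with h1 | h1
  · exact Or.inl ⟨h1, Nat.mod_eq_of_lt h1⟩
  · right
    refine ⟨h1, ?_⟩
    rw [Nat.mod_eq_sub_mod h1, Nat.mod_eq_of_lt (by omega)]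

lemma cyl_adj {n : ℕ} (hn : 9 ≤ n) {x y : Fin 4 × Fin n} :
    (pathGraph 4 □ cycleGraph n).Adj x y ↔
      ((x.1.val + 1 = y.1.val ∨ y.1.val + 1 = x.1.val) ∧ x.2.val = y.2.val) ∨
      (x.1.val = y.1.val ∧ (x.2.val + 1 = y.2.val ∨ y.2.val + 1 = x.2.val ∨
        (x.2.val = n - 1 ∧ y.2.val = 0) ∨ (y.2.val = n - 1 ∧ x.2.val = 0))) := by
  have h2 := x.2.isLt
  have h2' := y.2.isLt
  rw [boxProd_adj, pathGraph_adj, cycleGraph_adj']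
  have e1 : (x.2 - y.2).val = (x.2.val + (n - y.2.val)) % n := by
    rw [Fin.sub_def]; simp [Nat.add_comm]
  have e2 : (y.2 - x.2).val = (y.2.val + (n - x.2.val)) % n := by
    rw [Fin.sub_def]; simp [Nat.add_comm]
  rw [e1, e2, Fin.ext_iff, Fin.ext_iff]
  rcases mod_cases' (by omega : 0 < n) (by omega : x.2.val + (n - y.2.val) < 2 * n) with
    ⟨hm1a, hm1⟩ | ⟨hm1a, hm1⟩ <;>
  rcases mod_cases' (by omega : 0 < n) (by omega : y.2.val + (n - x.2.val) < 2 * n) with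
    ⟨hm2a, hm2⟩ | ⟨hm2a, hm2⟩ <;>
  rw [hm1, hm2] <;> omega

/-- Bob wins the Bob-start 3-coloring game on the 4 × n cylinder, n ≥ 9. -/
lemma bobWins_cylinder_three (n : ℕ) (hn : 9 ≤ n) :
    BobWins (pathGraph 4 □ cycleGraph n) 3 false (fun _ => none) := by
  refine BobWins.bobMove _ ((⟨1, by omega⟩ : Fin 4), (⟨0, by omega⟩ : Fin n)) 0
    ⟨rfl, fun u _ h => by cases h⟩ ?_
  refine BobWins.aliceTurn _ ?_ ?_
  · intro h
    have hne : ((⟨0, by omega⟩ : Fin 4), (⟨0, by omega⟩ : Fin n)) ≠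
        ((⟨1, by omega⟩ : Fin 4), (⟨0, by omega⟩ : Fin n)) := by
      simp only [ne_eq, Prod.mk.injEq, Fin.mk.injEq, not_and]; omega
    exact h _ (by rw [Function.update_of_ne hne])
  · intro v cv hvc
    obtain ⟨⟨r, hr⟩, ⟨m, hm⟩⟩ := v
    have hva : ((⟨r, hr⟩ : Fin 4), (⟨m, hm⟩ : Fin n)) ≠
        ((⟨1, by omega⟩ : Fin 4), (⟨0, by omega⟩ : Fin n)) := by
      intro h
      have h1 := hvc.1
      rw [h, Function.update_self] at h1
      cases h1
    have hva' : ¬(r = 1 ∧ m = 0) := by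
      intro ⟨e1, e2⟩
      exact hva (by simp only [Prod.mk.injEq, Fin.mk.injEq]; exact ⟨e1, e2⟩)
    by_cases cDL : (r = 2 ∧ m = 1) ∨ (r = 1 ∧ m = 1) ∨ (r = 2 ∧ m = 2) ∨
        (r = 0 ∧ m = 1) ∨ (r = 0 ∧ m = 2)
    · -- gadget DL : p=(2,n-1) u1=(1,n-1) t1=(0,n-1) u2=(2,0) t2=(3,0)
      refine cylGadget _ _ _ cv
        ((⟨2, by omega⟩ : Fin 4), (⟨n-1, by omega⟩ : Fin n))
        ((⟨1, by omega⟩ : Fin 4), (⟨n-1, by omega⟩ : Fin n))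
        ((⟨0, by omega⟩ : Fin 4), (⟨n-1, by omega⟩ : Fin n))
        ((⟨2, by omega⟩ : Fin 4), (⟨0, by omega⟩ : Fin n))
        ((⟨3, by omega⟩ : Fin 4), (⟨0, by omega⟩ : Fin n))
        ?_ ?_ ?_ ?_ ?_ ?_ ?_ ?_ ?_ ?_ ?_ hva ?_ ?_ ?_ ?_ ?_ ?_ ?_ ?_ ?_ <;>
      first
        | (intro x hx1 hx2; obtain ⟨⟨rx, hrx⟩, ⟨mx, hmx⟩⟩ := x;
           simp only [cyl_adj hn, Prod.mk.injEq, Fin.mk.injEq] at hx1 hx2; omega)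
        | (rw [cyl_adj hn]; dsimp only; omega)
        | (simp only [ne_eq, Prod.mk.injEq, Fin.mk.injEq, not_and]; omega)
    by_cases c6 : r = 3 ∧ m = 1
    · -- gadget UL : p=(0,n-1) u1=(1,n-1) t1=(2,n-1) u2=(0,0) t2=(0,1)
      refine cylGadget _ _ _ cv
        ((⟨0, by omega⟩ : Fin 4), (⟨n-1, by omega⟩ : Fin n))
        ((⟨1, by omega⟩ : Fin 4), (⟨n-1, by omega⟩ : Fin n))
        ((⟨2, by omega⟩ : Fin 4), (⟨n-1, by omega⟩ : Fin n))
        ((⟨0, by omega⟩ : Fin 4), (⟨0, by omega⟩ : Fin n))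
        ((⟨0, by omega⟩ : Fin 4), (⟨1, by omega⟩ : Fin n))
        ?_ ?_ ?_ ?_ ?_ ?_ ?_ ?_ ?_ ?_ ?_ hva ?_ ?_ ?_ ?_ ?_ ?_ ?_ ?_ ?_ <;>
      first
        | (intro x hx1 hx2; obtain ⟨⟨rx, hrx⟩, ⟨mx, hmx⟩⟩ := x;
           simp only [cyl_adj hn, Prod.mk.injEq, Fin.mk.injEq] at hx1 hx2; omega)
        | (rw [cyl_adj hn]; dsimp only; omega)
        | (simp only [ne_eq, Prod.mk.injEq, Fin.mk.injEq, not_and]; omega)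
    by_cases c7 : r = 2 ∧ m = 0
    · -- gadget UR' : p=(0,1) u1=(1,1) t1=(1,2) u2=(0,0) t2=(0,n-1)
      refine cylGadget _ _ _ cv
        ((⟨0, by omega⟩ : Fin 4), (⟨1, by omega⟩ : Fin n))
        ((⟨1, by omega⟩ : Fin 4), (⟨1, by omega⟩ : Fin n))
        ((⟨1, by omega⟩ : Fin 4), (⟨2, by omega⟩ : Fin n))
        ((⟨0, by omega⟩ : Fin 4), (⟨0, by omega⟩ : Fin n))
        ((⟨0, by omega⟩ : Fin 4), (⟨n-1, by omega⟩ : Fin n))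
        ?_ ?_ ?_ ?_ ?_ ?_ ?_ ?_ ?_ ?_ ?_ hva ?_ ?_ ?_ ?_ ?_ ?_ ?_ ?_ ?_ <;>
      first
        | (intro x hx1 hx2; obtain ⟨⟨rx, hrx⟩, ⟨mx, hmx⟩⟩ := x;
           simp only [cyl_adj hn, Prod.mk.injEq, Fin.mk.injEq] at hx1 hx2; omega)
        | (rw [cyl_adj hn]; dsimp only; omega)
        | (simp only [ne_eq, Prod.mk.injEq, Fin.mk.injEq, not_and]; omega)
    by_cases c8 : r = 0 ∧ m = 0
    · -- gadget DR' : p=(2,1) u1=(1,1) t1=(1,2) u2=(2,0) t2=(2,n-1)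
      refine cylGadget _ _ _ cv
        ((⟨2, by omega⟩ : Fin 4), (⟨1, by omega⟩ : Fin n))
        ((⟨1, by omega⟩ : Fin 4), (⟨1, by omega⟩ : Fin n))
        ((⟨1, by omega⟩ : Fin 4), (⟨2, by omega⟩ : Fin n))
        ((⟨2, by omega⟩ : Fin 4), (⟨0, by omega⟩ : Fin n))
        ((⟨2, by omega⟩ : Fin 4), (⟨n-1, by omega⟩ : Fin n))
        ?_ ?_ ?_ ?_ ?_ ?_ ?_ ?_ ?_ ?_ ?_ hva ?_ ?_ ?_ ?_ ?_ ?_ ?_ ?_ ?_ <;>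
      first
        | (intro x hx1 hx2; obtain ⟨⟨rx, hrx⟩, ⟨mx, hmx⟩⟩ := x;
           simp only [cyl_adj hn, Prod.mk.injEq, Fin.mk.injEq] at hx1 hx2; omega)
        | (rw [cyl_adj hn]; dsimp only; omega)
        | (simp only [ne_eq, Prod.mk.injEq, Fin.mk.injEq, not_and]; omega)
    by_cases c9 : r = 3 ∧ m = 0
    · -- gadget DR'' : p=(2,1) u1=(1,1) t1=(0,1) u2=(2,0) t2=(2,n-1)
      refine cylGadget _ _ _ cv
        ((⟨2, by omega⟩ : Fin 4), (⟨1, by omega⟩ : Fin n))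
        ((⟨1, by omega⟩ : Fin 4), (⟨1, by omega⟩ : Fin n))
        ((⟨0, by omega⟩ : Fin 4), (⟨1, by omega⟩ : Fin n))
        ((⟨2, by omega⟩ : Fin 4), (⟨0, by omega⟩ : Fin n))
        ((⟨2, by omega⟩ : Fin 4), (⟨n-1, by omega⟩ : Fin n))
        ?_ ?_ ?_ ?_ ?_ ?_ ?_ ?_ ?_ ?_ ?_ hva ?_ ?_ ?_ ?_ ?_ ?_ ?_ ?_ ?_ <;>
      first
        | (intro x hx1 hx2; obtain ⟨⟨rx, hrx⟩, ⟨mx, hmx⟩⟩ := x;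
           simp only [cyl_adj hn, Prod.mk.injEq, Fin.mk.injEq] at hx1 hx2; omega)
        | (rw [cyl_adj hn]; dsimp only; omega)
        | (simp only [ne_eq, Prod.mk.injEq, Fin.mk.injEq, not_and]; omega)
    by_cases c10 : r = 3 ∧ m = n - 1
    · -- gadget UR : p=(0,1) u1=(1,1) t1=(2,1) u2=(0,0) t2=(0,n-1)
      refine cylGadget _ _ _ cv
        ((⟨0, by omega⟩ : Fin 4), (⟨1, by omega⟩ : Fin n))
        ((⟨1, by omega⟩ : Fin 4), (⟨1, by omega⟩ : Fin n))
        ((⟨2, by omega⟩ : Fin 4), (⟨1, by omega⟩ : Fin n))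
        ((⟨0, by omega⟩ : Fin 4), (⟨0, by omega⟩ : Fin n))
        ((⟨0, by omega⟩ : Fin 4), (⟨n-1, by omega⟩ : Fin n))
        ?_ ?_ ?_ ?_ ?_ ?_ ?_ ?_ ?_ ?_ ?_ hva ?_ ?_ ?_ ?_ ?_ ?_ ?_ ?_ ?_ <;>
      first
        | (intro x hx1 hx2; obtain ⟨⟨rx, hrx⟩, ⟨mx, hmx⟩⟩ := x;
           simp only [cyl_adj hn, Prod.mk.injEq, Fin.mk.injEq] at hx1 hx2; omega)
        | (rw [cyl_adj hn]; dsimp only; omega)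
        | (simp only [ne_eq, Prod.mk.injEq, Fin.mk.injEq, not_and]; omega)
    -- default gadget DR : p=(2,1) u1=(1,1) t1=(0,1) u2=(2,0) t2=(3,0)
    refine cylGadget _ _ _ cv
      ((⟨2, by omega⟩ : Fin 4), (⟨1, by omega⟩ : Fin n))
      ((⟨1, by omega⟩ : Fin 4), (⟨1, by omega⟩ : Fin n))
      ((⟨0, by omega⟩ : Fin 4), (⟨1, by omega⟩ : Fin n))
      ((⟨2, by omega⟩ : Fin 4), (⟨0, by omega⟩ : Fin n))
      ((⟨3, by omega⟩ : Fin 4), (⟨0, by omega⟩ : Fin n))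
      ?_ ?_ ?_ ?_ ?_ ?_ ?_ ?_ ?_ ?_ ?_ hva ?_ ?_ ?_ ?_ ?_ ?_ ?_ ?_ ?_ <;>
    first
      | (intro x hx1 hx2; obtain ⟨⟨rx, hrx⟩, ⟨mx, hmx⟩⟩ := x;
         simp only [cyl_adj hn, Prod.mk.injEq, Fin.mk.injEq] at hx1 hx2; omega)
      | (rw [cyl_adj hn]; dsimp only; omega)
      | (simp only [ne_eq, Prod.mk.injEq, Fin.mk.injEq, not_and]; omega)

end Cylinder

section Small

lemma bobWins_cylinder_zero (n : ℕ) (hn : 9 ≤ n) :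
    BobWins (pathGraph 4 □ cycleGraph n) 0 false (fun _ => none) := by
  refine BobWins.bobStuck _ ?_ ?_
  · intro h
    exact h ((⟨0, by omega⟩ : Fin 4), (⟨0, by omega⟩ : Fin n)) rfl
  · intro v col
    exact col.elim0

lemma bobWins_cylinder_one (n : ℕ) (hn : 9 ≤ n) :
    BobWins (pathGraph 4 □ cycleGraph n) 1 false (fun _ => none) := by
  refine BobWins.bobMove _ ((⟨0, by omega⟩ : Fin 4), (⟨0, by omega⟩ : Fin n)) 0
    ⟨rfl, fun u _ h => by cases h⟩ ?_
  set c1 := Function.update (fun _ : Fin 4 × Fin n => none)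
    ((⟨0, by omega⟩ : Fin 4), (⟨0, by omega⟩ : Fin n)) (some (0 : Fin 1)) with hc1
  apply bobWins_of_dead _ (uncoloredCount c1) c1 true
    ((⟨0, by omega⟩ : Fin 4), (⟨1, by omega⟩ : Fin n)) le_rfl
  · rw [hc1, Function.update_of_ne (by simp only [ne_eq, Prod.mk.injEq, Fin.mk.injEq, not_and]; omega)]
  · intro col
    have hcol : col = 0 := Subsingleton.elim _ _
    subst hcol
    refine ⟨((⟨0, by omega⟩ : Fin 4), (⟨0, by omega⟩ : Fin n)), ?_, ?_⟩
    · rw [cyl_adj hn]; dsimp only; omega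
    · rw [hc1, Function.update_self]

lemma bobWins_cylinder_two (n : ℕ) (hn : 9 ≤ n) :
    BobWins (pathGraph 4 □ cycleGraph n) 2 false (fun _ => none) := by
  refine BobWins.bobMove _ ((⟨1, by omega⟩ : Fin 4), (⟨0, by omega⟩ : Fin n)) 0
    ⟨rfl, fun u _ h => by cases h⟩ ?_
  set c1 := Function.update (fun _ : Fin 4 × Fin n => none)
    ((⟨1, by omega⟩ : Fin 4), (⟨0, by omega⟩ : Fin n)) (some (0 : Fin 2)) with hc1
  have hcA : c1 ((⟨1, by omega⟩ : Fin 4), (⟨0, by omega⟩ : Fin n)) = some 0 := by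
    rw [hc1, Function.update_self]
  have heval : ∀ w, w ≠ ((⟨1, by omega⟩ : Fin 4), (⟨0, by omega⟩ : Fin n)) → c1 w = none := by
    intro w hw
    rw [hc1, Function.update_of_ne hw]
  have hnosome1 : ∀ w, c1 w ≠ some (1 : Fin 2) := by
    intro w
    rcases eq_or_ne w ((⟨1, by omega⟩ : Fin 4), (⟨0, by omega⟩ : Fin n)) with rfl | hw
    · rw [hcA]; intro h; exact absurd (Option.some_injective _ h) (by decide)
    · rw [heval w hw]; exact fun h => by cases h
  have hwit : ∀ (u : Fin 4 × Fin n),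
      (pathGraph 4 □ cycleGraph n).Adj ((⟨1, by omega⟩ : Fin 4), (⟨0, by omega⟩ : Fin n)) u →
      ∀ col' : Fin 2, col' ≠ 1 → ∃ w, (pathGraph 4 □ cycleGraph n).Adj w u ∧ c1 w = some col' := by
    intro u hadj col' hcol'
    have : col' = 0 := by
      have h2 := col'.isLt
      have : col'.val ≠ 1 := fun h => hcol' (Fin.ext h)
      exact Fin.ext (by omega)
    subst this
    exact ⟨_, hadj, hcA⟩
  refine BobWins.aliceTurn _ ?_ ?_
  · intro h
    exact h ((⟨0, by omega⟩ : Fin 4), (⟨0, by omega⟩ : Fin n))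
      (heval _ (by simp only [ne_eq, Prod.mk.injEq, Fin.mk.injEq, not_and]; omega))
  · intro v cv hvc
    obtain ⟨⟨r, hr⟩, ⟨m, hm⟩⟩ := v
    by_cases hcase : (r = 1 ∧ m = 1) ∨ (r = 1 ∧ m = 2) ∨ (r = 0 ∧ m = 2) ∨
        (r = 2 ∧ m = 2) ∨ (r = 1 ∧ m = 3)
    · -- kill with u=(2,0), t=(3,0)
      refine bobWins_kill _ c1 ((⟨2, by omega⟩ : Fin 4), (⟨0, by omega⟩ : Fin n))
        ((⟨3, by omega⟩ : Fin 4), (⟨0, by omega⟩ : Fin n)) 1 _ cv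
        (heval _ (by simp only [ne_eq, Prod.mk.injEq, Fin.mk.injEq, not_and]; omega))
        (heval _ (by simp only [ne_eq, Prod.mk.injEq, Fin.mk.injEq, not_and]; omega))
        (by rw [cyl_adj hn]; dsimp only; omega)
        (fun w _ => hnosome1 w)
        (hwit _ (by rw [cyl_adj hn]; dsimp only; omega))
        hvc.1 ?_
      rw [cyl_adj hn]
      simp only [ne_eq, Prod.mk.injEq, Fin.mk.injEq, not_or]
      omega
    · -- kill with u=(1,1), t=(1,2)
      refine bobWins_kill _ c1 ((⟨1, by omega⟩ : Fin 4), (⟨1, by omega⟩ : Fin n))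
        ((⟨1, by omega⟩ : Fin 4), (⟨2, by omega⟩ : Fin n)) 1 _ cv
        (heval _ (by simp only [ne_eq, Prod.mk.injEq, Fin.mk.injEq, not_and]; omega))
        (heval _ (by simp only [ne_eq, Prod.mk.injEq, Fin.mk.injEq, not_and]; omega))
        (by rw [cyl_adj hn]; dsimp only; omega)
        (fun w _ => hnosome1 w)
        (hwit _ (by rw [cyl_adj hn]; dsimp only; omega))
        hvc.1 ?_
      rw [cyl_adj hn]
      simp only [ne_eq, Prod.mk.injEq, Fin.mk.injEq, not_or]
      omega

lemma aliceWins_cylinder_five (n : ℕ) (hn : 9 ≤ n) :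
    AliceWins (pathGraph 4 □ cycleGraph n) 5 false (fun _ => none) := by
  haveI : NeZero n := ⟨by omega⟩
  apply aliceWins_of_small_neighborhoods _ ?_ (uncoloredCount (fun _ => none)) _ false le_rfl
  intro v
  refine ⟨{(v.1 + 1, v.2), (v.1 - 1, v.2), (v.1, v.2 + 1), (v.1, v.2 - 1)}, ?_, ?_⟩
  · refine lt_of_le_of_lt ?_ (by norm_num : (4:ℕ) < 5)
    refine le_trans (Finset.card_insert_le _ _) ?_
    refine le_trans (Nat.add_le_add_right (Finset.card_insert_le _ _) 1) ?_
    refine le_trans (Nat.add_le_add_right (Nat.add_le_add_right (Finset.card_insert_le _ _) 1) 1) ?_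
    simp
  · intro w hw
    rw [cyl_adj hn] at hw
    have h1 := w.1.isLt
    have h2 := w.2.isLt
    have h3 := v.1.isLt
    have h4 := v.2.isLt
    have h1n : (1 : ℕ) % n = 1 := Nat.mod_eq_of_lt (by omega)
    have e1 : ((v.1 + 1 : Fin 4)).val = (v.1.val + 1) % 4 := by
      rw [Fin.add_def]; simp
    have e2 : ((v.1 - 1 : Fin 4)).val = (4 - 1 + v.1.val) % 4 := by
      rw [Fin.sub_def]; simp
    have e3 : ((v.2 + 1 : Fin n)).val = (v.2.val + 1) % n := by
      rw [Fin.add_def, Fin.val_one', h1n]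
    have e4 : ((v.2 - 1 : Fin n)).val = (n - 1 + v.2.val) % n := by
      rw [Fin.sub_def, Fin.val_one', h1n]
    rcases mod_cases' (by omega : 0 < n) (by omega : v.2.val + 1 < 2 * n) with ⟨hb1, hm1⟩ | ⟨hb1, hm1⟩ <;>
    rcases mod_cases' (by omega : 0 < n) (by omega : n - 1 + v.2.val < 2 * n) with ⟨hb2, hm2⟩ | ⟨hb2, hm2⟩ <;>
    · simp only [Finset.mem_insert, Finset.mem_singleton, Prod.ext_iff, Fin.ext_iff, e1, e2, e3,
        e4, hm1, hm2]
      omega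

end Small

/-- For every `n ≥ 9`, Bob has a winning strategy in the Bob-start
`3`-coloring game on the `4 × n` cylinder graph `P₄ □ Cₙ`; consequently
`χ_g^B(P₄ □ Cₙ) ≥ 4`. -/
theorem four_le_bobStartGameChromaticNumber_cylinder (n : ℕ) (hn : 9 ≤ n) :
    BobWins (pathGraph 4 □ cycleGraph n) 3 false (fun _ => none) ∧
      4 ≤ bobStartGameChromaticNumber (pathGraph 4 □ cycleGraph n) := by
  refine ⟨bobWins_cylinder_three n hn, ?_⟩
  rw [bobStartGameChromaticNumber]
  refine le_csInf ⟨5, aliceWins_cylinder_five n hn⟩ ?_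
  intro k hk
  simp only [Set.mem_setOf_eq] at hk
  by_contra hlt
  push_neg at hlt
  interval_cases k
  · exact not_aliceWins_and_bobWins _ 0 hk (bobWins_cylinder_zero n hn)
  · exact not_aliceWins_and_bobWins _ 1 hk (bobWins_cylinder_one n hn)
  · exact not_aliceWins_and_bobWins _ 2 hk (bobWins_cylinder_two n hn)
  · exact not_aliceWins_and_bobWins _ 3 hk (bobWins_cylinder_three n hn)
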